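/- Fix an integer N ≥ 1, reals σh², σw² > 0, and P_F ∈ (0,1). For each integer K ≥ 1 define the probability measure μ_K^{(0)} on ℝ^{2N} as the Gaussian mixture μ_K^{(0)} = Σ_{ℓ=0}^{K} C(K,ℓ)·P_F^ℓ·(1−P_F)^{K−ℓ} · Π_{i=1}^{2N} 𝒩(0, v_ℓ), where v_ℓ = (ℓ·σh²/N + σw²)/(2·P_F·K·σh²), and similarly μ_K^{(1)} with the mixing weights C(K,ℓ)·P_D^ℓ·(1−P_D)^{K−ℓ} for some P_D ∈ (0,1) and the same variances v_ℓ. Then, as K → ∞, μ_K^{(0)} converges weakly (in distribution) to the product measure Π_{i=1}^{2N} 𝒩(0, 1/(2N)), and μ_K^{(1)} converges weakly to Π_{i=1}^{2N} 𝒩(0, P_D/(2·P_F·N)). -/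

import Mathlib

open MeasureTheory ProbabilityTheory Filter Finset

section Aux

lemma binom_sum_aux (p : ℝ) (K : ℕ) :
    ∑ ℓ ∈ range (K + 1), (K.choose ℓ : ℝ) * p ^ ℓ * (1 - p) ^ (K - ℓ) = 1 := by
  have h := add_pow p (1 - p) K
  simp only [add_sub_cancel, one_pow] at h
  calc ∑ ℓ ∈ range (K + 1), (K.choose ℓ : ℝ) * p ^ ℓ * (1 - p) ^ (K - ℓ)
      = ∑ m ∈ range (K + 1), p ^ m * (1 - p) ^ (K - m) * (K.choose m : ℝ) :=
        Finset.sum_congr rfl fun ℓ _ => by ring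
    _ = 1 := h.symm

lemma binom_mean_aux (p : ℝ) (K : ℕ) :
    ∑ ℓ ∈ range (K + 1), (K.choose ℓ : ℝ) * p ^ ℓ * (1 - p) ^ (K - ℓ) * ℓ = K * p := by
  cases K with
  | zero => simp
  | succ K =>
    rw [Finset.sum_range_succ' (fun ℓ => ((K+1).choose ℓ : ℝ) * p ^ ℓ * (1 - p) ^ (K + 1 - ℓ) * ℓ)]
    simp only [Nat.cast_zero, mul_zero, add_zero]
    have key : ∀ j ∈ range (K + 1),
        ((K+1).choose (j+1) : ℝ) * p ^ (j+1) * (1 - p) ^ (K + 1 - (j+1)) * ((j+1 : ℕ) : ℝ)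
        = ((K+1 : ℕ) : ℝ) * p * ((K.choose j : ℝ) * p ^ j * (1 - p) ^ (K - j)) := by
      intro j hj
      have h := Nat.add_one_mul_choose_eq K j
      have h' : ((K+1) * K.choose j : ℝ) = ((K+1).choose (j+1) * (j+1) : ℝ) := by
        exact_mod_cast congrArg Nat.cast h
      have hs : (K + 1) - (j + 1) = K - j := by omega
      rw [hs]
      push_cast at h' ⊢
      linear_combination (-(p ^ (j+1) * (1-p)^(K-j))) * h'
    rw [Finset.sum_congr rfl key, ← Finset.mul_sum, binom_sum_aux]
    push_cast; ring

lemma binom_second_aux (p : ℝ) (K : ℕ) :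
    ∑ ℓ ∈ range (K + 1), (K.choose ℓ : ℝ) * p ^ ℓ * (1 - p) ^ (K - ℓ) * (ℓ * (ℓ - 1)) =
      K * (K - 1) * p ^ 2 := by
  cases K with
  | zero => simp
  | succ K =>
    rw [Finset.sum_range_succ' (fun ℓ => ((K+1).choose ℓ : ℝ) * p ^ ℓ * (1 - p) ^ (K + 1 - ℓ) * ((ℓ:ℝ) * ((ℓ:ℝ) - 1)))]
    simp only [Nat.cast_zero, zero_mul, mul_zero, add_zero]
    have key : ∀ j ∈ range (K + 1),
        ((K+1).choose (j+1) : ℝ) * p ^ (j+1) * (1 - p) ^ (K + 1 - (j+1)) * (((j+1:ℕ):ℝ) * (((j+1:ℕ):ℝ) - 1))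
        = ((K+1 : ℕ) : ℝ) * p * ((K.choose j : ℝ) * p ^ j * (1 - p) ^ (K - j) * (j : ℝ)) := by
      intro j hj
      have h := Nat.add_one_mul_choose_eq K j
      have h' : ((K+1) * K.choose j : ℝ) = ((K+1).choose (j+1) * (j+1) : ℝ) := by
        exact_mod_cast congrArg Nat.cast h
      have hs : (K + 1) - (j + 1) = K - j := by omega
      rw [hs]
      push_cast at h' ⊢
      linear_combination (-(p ^ (j+1) * (1-p)^(K-j) * j)) * h'
    rw [Finset.sum_congr rfl key, ← Finset.mul_sum, binom_mean_aux]
    push_cast; ring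

lemma binom_var_aux (p : ℝ) (K : ℕ) :
    ∑ ℓ ∈ range (K + 1), (K.choose ℓ : ℝ) * p ^ ℓ * (1 - p) ^ (K - ℓ) * ((ℓ : ℝ) - K * p) ^ 2
      = K * p * (1 - p) := by
  have e : ∀ ℓ ∈ range (K + 1),
      (K.choose ℓ : ℝ) * p ^ ℓ * (1 - p) ^ (K - ℓ) * ((ℓ : ℝ) - K * p) ^ 2
      = ((K.choose ℓ : ℝ) * p ^ ℓ * (1 - p) ^ (K - ℓ) * ((ℓ:ℝ) * ((ℓ:ℝ) - 1)))
        + (1 - 2 * K * p) * ((K.choose ℓ : ℝ) * p ^ ℓ * (1 - p) ^ (K - ℓ) * ℓ)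
        + ((K:ℝ)^2 * p^2) * ((K.choose ℓ : ℝ) * p ^ ℓ * (1 - p) ^ (K - ℓ)) := by
    intro ℓ _; ring
  rw [Finset.sum_congr rfl e]
  rw [Finset.sum_add_distrib, Finset.sum_add_distrib, ← Finset.mul_sum, ← Finset.mul_sum,
    binom_second_aux, binom_mean_aux, binom_sum_aux]
  ring

lemma mixture_tendsto_aux {p : ℝ} (hp0 : 0 < p) (hp1 : p < 1)
    {G : ℝ → ℝ} {M : ℝ} (hM : ∀ t, |G t| ≤ M)
    {t0 : ℝ} (hG : ContinuousAt G t0)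
    {u : ℕ → ℕ → ℝ} {a b : ℝ} (ha : 0 ≤ a) (hb : 0 ≤ b)
    (hu : ∀ K, 1 ≤ K → ∀ ℓ, ℓ ≤ K → |u K ℓ - t0| ≤ a * |(ℓ : ℝ) / K - p| + b / K) :
    Tendsto (fun K => ∑ ℓ ∈ range (K + 1),
      (K.choose ℓ : ℝ) * p ^ ℓ * (1 - p) ^ (K - ℓ) * G (u K ℓ)) atTop (nhds (G t0)) := by
  have hM0 : 0 ≤ M := le_trans (abs_nonneg _) (hM t0)
  rw [Metric.tendsto_atTop]
  intro ε hε
  obtain ⟨δ', hδ', hcont⟩ := Metric.continuousAt_iff.mp hG (ε/3) (by positivity)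
  set δ : ℝ := δ' / (2 * (a + 1)) with hδdef
  have hδ : 0 < δ := by positivity
  set C : ℝ := 2 * M * p * (1 - p) / δ ^ 2 with hCdef
  have hC0 : 0 ≤ C := by
    apply div_nonneg _ (by positivity)
    have : 0 ≤ 1 - p := by linarith
    positivity
  obtain ⟨n1, hn1⟩ := exists_nat_gt (2 * b / δ')
  obtain ⟨n2, hn2⟩ := exists_nat_gt (3 * C / ε)
  refine ⟨max 1 (max (n1 + 1) (n2 + 1)), fun K hK => ?_⟩
  have hK1 : 1 ≤ K := le_trans (le_max_left _ _) hK
  have hKpos : (0:ℝ) < K := by exact_mod_cast hK1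
  have hKn1 : 2 * b / δ' < K := by
    have : (n1 : ℝ) < K := by
      have : n1 + 1 ≤ K := le_trans (le_trans (le_max_left _ _) (le_max_right _ _)) hK
      exact_mod_cast Nat.lt_of_succ_le this
    linarith
  have hKn2 : 3 * C / ε < K := by
    have : (n2 : ℝ) < K := by
      have : n2 + 1 ≤ K := le_trans (le_trans (le_max_right _ _) (le_max_right _ _)) hK
      exact_mod_cast Nat.lt_of_succ_le this
    linarith
  have hbK : b / K < δ' / 2 := by
    rw [div_lt_div_iff₀ hKpos (by norm_num)]
    rw [div_lt_iff₀ hδ'] at hKn1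
    linarith
  have hptwise : ∀ ℓ ∈ range (K + 1),
      |G (u K ℓ) - G t0| ≤ ε / 3 + (2 * M / ((K:ℝ) * δ) ^ 2) * ((ℓ:ℝ) - K * p) ^ 2 := by
    intro ℓ hℓ
    have hℓK : ℓ ≤ K := Nat.lt_succ_iff.mp (Finset.mem_range.mp hℓ)
    by_cases hgood : |(ℓ:ℝ) / K - p| < δ
    · have h1 : |u K ℓ - t0| < δ' := by
        have := hu K hK1 ℓ hℓK
        have haδ : a * |(ℓ:ℝ) / K - p| ≤ a * δ := mul_le_mul_of_nonneg_left hgood.le ha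
        have : |u K ℓ - t0| ≤ a * δ + b / K := by linarith
        have haδ2 : a * δ ≤ δ' / 2 := by
          rw [hδdef, mul_comm, div_mul_eq_mul_div, div_le_div_iff₀ (by positivity) (by norm_num)]
          nlinarith
        linarith
      have := hcont (by simpa [Real.dist_eq] using h1)
      rw [Real.dist_eq] at this
      have hpos : 0 ≤ (2 * M / ((K:ℝ) * δ) ^ 2) * ((ℓ:ℝ) - K * p) ^ 2 := by positivity
      linarith
    · push_neg at hgood
      have h2M : |G (u K ℓ) - G t0| ≤ 2 * M := by
        calc |G (u K ℓ) - G t0| ≤ |G (u K ℓ)| + |G t0| := abs_sub _ _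
          _ ≤ 2 * M := by have := hM (u K ℓ); have := hM t0; linarith
      have hKδ : (K:ℝ) * δ ≤ |(ℓ:ℝ) - K * p| := by
        have : |(ℓ:ℝ) - K * p| = K * |(ℓ:ℝ)/K - p| := by
          rw [← abs_of_pos hKpos, ← abs_mul]
          congr 1
          field_simp
          rw [abs_of_pos hKpos]; ring
        rw [this]
        exact mul_le_mul_of_nonneg_left hgood (le_of_lt hKpos)
      have hsq : ((K:ℝ) * δ) ^ 2 ≤ ((ℓ:ℝ) - K * p) ^ 2 := by
        rw [← sq_abs ((ℓ:ℝ) - K * p)]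
        exact pow_le_pow_left₀ (by positivity) hKδ 2
      have : 2 * M ≤ (2 * M / ((K:ℝ) * δ) ^ 2) * ((ℓ:ℝ) - K * p) ^ 2 := by
        rw [div_mul_eq_mul_div, le_div_iff₀ (by positivity)]
        nlinarith
      linarith [le_of_lt (show (0:ℝ) < ε/3 by positivity)]
  have hw0 : ∀ ℓ, 0 ≤ (K.choose ℓ : ℝ) * p ^ ℓ * (1 - p) ^ (K - ℓ) := by
    intro ℓ
    have : (0:ℝ) ≤ 1 - p := by linarith
    positivity
  rw [Real.dist_eq]
  have hsplit : (∑ ℓ ∈ range (K + 1),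
        (K.choose ℓ : ℝ) * p ^ ℓ * (1 - p) ^ (K - ℓ) * G (u K ℓ)) - G t0
      = ∑ ℓ ∈ range (K + 1),
        (K.choose ℓ : ℝ) * p ^ ℓ * (1 - p) ^ (K - ℓ) * (G (u K ℓ) - G t0) := by
    have h1 : ∑ ℓ ∈ range (K + 1),
        (K.choose ℓ : ℝ) * p ^ ℓ * (1 - p) ^ (K - ℓ) * (G (u K ℓ) - G t0)
        = (∑ ℓ ∈ range (K + 1), (K.choose ℓ : ℝ) * p ^ ℓ * (1 - p) ^ (K - ℓ) * G (u K ℓ))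
          - (∑ ℓ ∈ range (K + 1), (K.choose ℓ : ℝ) * p ^ ℓ * (1 - p) ^ (K - ℓ)) * G t0 := by
      rw [Finset.sum_mul, ← Finset.sum_sub_distrib]
      exact Finset.sum_congr rfl fun ℓ _ => by ring
    rw [h1, binom_sum_aux, one_mul]
  rw [hsplit]
  have step1 : |∑ ℓ ∈ range (K + 1),
        (K.choose ℓ : ℝ) * p ^ ℓ * (1 - p) ^ (K - ℓ) * (G (u K ℓ) - G t0)|
      ≤ ∑ ℓ ∈ range (K + 1),
        (K.choose ℓ : ℝ) * p ^ ℓ * (1 - p) ^ (K - ℓ) * |G (u K ℓ) - G t0| := by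
    refine (Finset.abs_sum_le_sum_abs _ _).trans (Finset.sum_le_sum fun ℓ _ => ?_)
    rw [abs_mul, abs_of_nonneg (hw0 ℓ)]
  have step2 : ∑ ℓ ∈ range (K + 1),
        (K.choose ℓ : ℝ) * p ^ ℓ * (1 - p) ^ (K - ℓ) * |G (u K ℓ) - G t0|
      ≤ ∑ ℓ ∈ range (K + 1),
        (K.choose ℓ : ℝ) * p ^ ℓ * (1 - p) ^ (K - ℓ) *
          (ε / 3 + (2 * M / ((K:ℝ) * δ) ^ 2) * ((ℓ:ℝ) - K * p) ^ 2) :=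
    Finset.sum_le_sum fun ℓ hℓ => mul_le_mul_of_nonneg_left (hptwise ℓ hℓ) (hw0 ℓ)
  have step3 : ∑ ℓ ∈ range (K + 1),
        (K.choose ℓ : ℝ) * p ^ ℓ * (1 - p) ^ (K - ℓ) *
          (ε / 3 + (2 * M / ((K:ℝ) * δ) ^ 2) * ((ℓ:ℝ) - K * p) ^ 2)
      = ε / 3 + C / K := by
    have h2 : ∀ ℓ ∈ range (K + 1),
        (K.choose ℓ : ℝ) * p ^ ℓ * (1 - p) ^ (K - ℓ) *
          (ε / 3 + (2 * M / ((K:ℝ) * δ) ^ 2) * ((ℓ:ℝ) - K * p) ^ 2)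
        = ε / 3 * ((K.choose ℓ : ℝ) * p ^ ℓ * (1 - p) ^ (K - ℓ))
          + (2 * M / ((K:ℝ) * δ) ^ 2) *
            ((K.choose ℓ : ℝ) * p ^ ℓ * (1 - p) ^ (K - ℓ) * ((ℓ:ℝ) - K * p) ^ 2) := by
      intro ℓ _; ring
    rw [Finset.sum_congr rfl h2, Finset.sum_add_distrib, ← Finset.mul_sum, ← Finset.mul_sum,
      binom_sum_aux, binom_var_aux, hCdef]
    have hK0 : (K:ℝ) ≠ 0 := ne_of_gt hKpos
    have hδ0 : δ ≠ 0 := ne_of_gt hδ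
    field_simp
  have hCK : C / K < ε / 3 := by
    rw [div_lt_iff₀ hKpos]
    rw [div_lt_iff₀ hε] at hKn2
    nlinarith
  calc |∑ ℓ ∈ range (K + 1),
        (K.choose ℓ : ℝ) * p ^ ℓ * (1 - p) ^ (K - ℓ) * (G (u K ℓ) - G t0)|
      ≤ ε / 3 + C / K := by rw [← step3]; exact step1.trans step2
    _ < ε := by linarith

lemma gauss_scale_aux (t : ℝ) :
    gaussianReal 0 t.toNNReal = (gaussianReal 0 1).map (fun x => Real.sqrt t * x) := by
  have h := gaussianReal_map_const_mul (μ := 0) (v := 1) (Real.sqrt t)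
  rw [h, mul_zero]
  congr 1
  ext
  rcases le_or_gt 0 t with ht | ht
  · simp [Real.sq_sqrt ht, Real.toNNReal_of_nonneg ht]
  · simp [Real.toNNReal_of_nonpos (le_of_lt ht), Real.sqrt_eq_zero'.mpr ht.le]

lemma pi_gauss_scale_aux (n : ℕ) (t : ℝ) :
    Measure.pi (fun _ : Fin n => gaussianReal 0 t.toNNReal)
      = (Measure.pi (fun _ : Fin n => gaussianReal 0 1)).map
          (fun x i => Real.sqrt t * x i) := by
  have hmeas : Measurable (fun (x : Fin n → ℝ) i => Real.sqrt t * x i) :=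
    measurable_pi_lambda _ fun i => (measurable_pi_apply i).const_mul _
  refine Measure.pi_eq fun s hs => ?_
  rw [Measure.map_apply hmeas (MeasurableSet.univ_pi hs)]
  have hpre : (fun (x : Fin n → ℝ) i => Real.sqrt t * x i) ⁻¹' (Set.univ.pi s)
      = Set.univ.pi (fun i => (fun x => Real.sqrt t * x) ⁻¹' s i) := by
    ext x; simp [Set.mem_pi]
  rw [hpre, Measure.pi_pi]
  refine Finset.prod_congr rfl fun i _ => ?_
  rw [gauss_scale_aux, Measure.map_apply (measurable_const_mul _) (hs i)]

lemma integral_pi_gauss_aux (n : ℕ) (f : BoundedContinuousFunction (Fin n → ℝ) ℝ) (t : ℝ) :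
    ∫ x, f x ∂(Measure.pi (fun _ : Fin n => gaussianReal 0 t.toNNReal))
      = ∫ x, f (fun i => Real.sqrt t * x i)
          ∂(Measure.pi (fun _ : Fin n => gaussianReal 0 1)) := by
  have hmeas : Measurable (fun (x : Fin n → ℝ) i => Real.sqrt t * x i) :=
    measurable_pi_lambda _ fun i => (measurable_pi_apply i).const_mul _
  rw [pi_gauss_scale_aux, integral_map hmeas.aemeasurable
    f.continuous.aestronglyMeasurable]

lemma Gcont_aux (n : ℕ) (f : BoundedContinuousFunction (Fin n → ℝ) ℝ) :
    Continuous (fun t : ℝ => ∫ x, f x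
      ∂(Measure.pi (fun _ : Fin n => gaussianReal 0 t.toNNReal))) := by
  have : (fun t : ℝ => ∫ x, f x
      ∂(Measure.pi (fun _ : Fin n => gaussianReal 0 t.toNNReal)))
      = fun t : ℝ => ∫ x, f (fun i => Real.sqrt t * x i)
          ∂(Measure.pi (fun _ : Fin n => gaussianReal 0 1)) :=
    funext fun t => integral_pi_gauss_aux n f t
  rw [this]
  refine continuous_of_dominated (fun t => ?_) (fun t => ?_)
    (integrable_const ‖f‖) ?_
  · exact (f.continuous.comp
      (continuous_pi fun i => continuous_const.mul (continuous_apply i))).aestronglyMeasurable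
  · exact Filter.Eventually.of_forall fun x => f.norm_coe_le_norm _
  · refine Filter.Eventually.of_forall fun x => ?_
    exact f.continuous.comp
      (continuous_pi fun i => (Real.continuous_sqrt.mul continuous_const))

lemma Gbound_aux (n : ℕ) (f : BoundedContinuousFunction (Fin n → ℝ) ℝ) (t : ℝ) :
    |∫ x, f x ∂(Measure.pi (fun _ : Fin n => gaussianReal 0 t.toNNReal))| ≤ ‖f‖ := by
  have := norm_integral_le_of_norm_le_const
    (μ := Measure.pi (fun _ : Fin n => gaussianReal 0 t.toNNReal)) (C := ‖f‖)
    (Filter.Eventually.of_forall fun x => f.norm_coe_le_norm x)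
  simpa using this

lemma integral_mixture_aux (n : ℕ) (f : BoundedContinuousFunction (Fin n → ℝ) ℝ)
    (K : ℕ) (w : ℕ → ℝ) (hw : ∀ ℓ, 0 ≤ w ℓ) (u : ℕ → ℝ) :
    ∫ x, f x ∂(∑ ℓ ∈ range (K + 1), (ENNReal.ofReal (w ℓ)) •
        Measure.pi (fun _ : Fin n => gaussianReal 0 (u ℓ).toNNReal))
      = ∑ ℓ ∈ range (K + 1), w ℓ *
          ∫ x, f x ∂(Measure.pi (fun _ : Fin n => gaussianReal 0 (u ℓ).toNNReal)) := by
  rw [integral_finset_sum_measure]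
  · refine Finset.sum_congr rfl fun ℓ _ => ?_
    rw [integral_smul_measure, ENNReal.toReal_ofReal (hw ℓ), smul_eq_mul]
  · intro ℓ _
    exact (f.integrable _).smul_measure ENNReal.ofReal_ne_top

end Aux

/-- Theorem 4 (IPC case): the Gaussian-mixture laws of the normalized received
vector converge weakly, as the number of sensors `K → ∞`, to the product
Gaussian laws `Π 𝒩(0, 1/(2N))` under `H₀` and `Π 𝒩(0, P_D/(2 P_F N))` under
`H₁`. Weak convergence is expressed via integrals of bounded continuous
functions. -/
theorem stmt_8 (N : ℕ) (hN : 1 ≤ N) (σh2 σw2 : ℝ) (hσh : 0 < σh2) (hσw : 0 < σw2)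
    (PF PD : ℝ) (hPF : PF ∈ Set.Ioo (0 : ℝ) 1) (hPD : PD ∈ Set.Ioo (0 : ℝ) 1)
    (v : ℕ → ℕ → ℝ)
    (hv : ∀ K ℓ, v K ℓ = (ℓ * σh2 / N + σw2) / (2 * PF * K * σh2))
    (μ0 μ1 : ℕ → Measure (Fin (2 * N) → ℝ))
    (hμ0 : ∀ K, μ0 K = ∑ ℓ ∈ Finset.range (K + 1),
        (ENNReal.ofReal ((K.choose ℓ : ℝ) * PF ^ ℓ * (1 - PF) ^ (K - ℓ))) •
          Measure.pi (fun _ : Fin (2 * N) => gaussianReal 0 (v K ℓ).toNNReal))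
    (hμ1 : ∀ K, μ1 K = ∑ ℓ ∈ Finset.range (K + 1),
        (ENNReal.ofReal ((K.choose ℓ : ℝ) * PD ^ ℓ * (1 - PD) ^ (K - ℓ))) •
          Measure.pi (fun _ : Fin (2 * N) => gaussianReal 0 (v K ℓ).toNNReal)) :
    (∀ f : BoundedContinuousFunction (Fin (2 * N) → ℝ) ℝ,
        Tendsto (fun K : ℕ => ∫ x, f x ∂(μ0 K)) atTop
          (nhds (∫ x, f x ∂(Measure.pi (fun _ : Fin (2 * N) =>
            gaussianReal 0 (Real.toNNReal (1 / (2 * N)))))))) ∧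
    (∀ f : BoundedContinuousFunction (Fin (2 * N) → ℝ) ℝ,
        Tendsto (fun K : ℕ => ∫ x, f x ∂(μ1 K)) atTop
          (nhds (∫ x, f x ∂(Measure.pi (fun _ : Fin (2 * N) =>
            gaussianReal 0 (Real.toNNReal (PD / (2 * PF * N)))))))) := by
  obtain ⟨hPF0, hPF1⟩ := hPF
  obtain ⟨hPD0, hPD1⟩ := hPD
  have hN0 : (0:ℝ) < N := by exact_mod_cast hN
  have key : ∀ (p : ℝ), 0 < p → p < 1 →
      ∀ f : BoundedContinuousFunction (Fin (2 * N) → ℝ) ℝ,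
      Tendsto (fun K : ℕ => ∑ ℓ ∈ Finset.range (K + 1),
          (K.choose ℓ : ℝ) * p ^ ℓ * (1 - p) ^ (K - ℓ) *
            ∫ x, f x ∂(Measure.pi (fun _ : Fin (2 * N) => gaussianReal 0 (v K ℓ).toNNReal)))
        atTop (nhds (∫ x, f x ∂(Measure.pi (fun _ : Fin (2 * N) =>
          gaussianReal 0 (Real.toNNReal (p / (2 * PF * N))))))) := by
    intro p hp0 hp1 f
    refine mixture_tendsto_aux (G := fun t => ∫ x, f x
        ∂(Measure.pi (fun _ : Fin (2 * N) => gaussianReal 0 t.toNNReal)))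
      (M := ‖f‖) (t0 := p / (2 * PF * N))
      (a := 1 / (2 * PF * N)) (b := σw2 / (2 * PF * σh2))
      hp0 hp1 (Gbound_aux (2 * N) f) ((Gcont_aux (2 * N) f).continuousAt)
      (by positivity) (by positivity) ?_
    intro K hK1 ℓ hℓ
    have hKpos : (0:ℝ) < K := by exact_mod_cast hK1
    rw [hv]
    have hid : ((ℓ : ℝ) * σh2 / N + σw2) / (2 * PF * K * σh2) - p / (2 * PF * N)
        = (1 / (2 * PF * N)) * ((ℓ:ℝ) / K - p) + (σw2 / (2 * PF * σh2)) / K := by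
      field_simp
      ring
    rw [hid]
    calc |(1 / (2 * PF * N)) * ((ℓ:ℝ) / K - p) + (σw2 / (2 * PF * σh2)) / K|
        ≤ |(1 / (2 * PF * N)) * ((ℓ:ℝ) / K - p)| + |(σw2 / (2 * PF * σh2)) / K| :=
          abs_add_le _ _
      _ = 1 / (2 * PF * N) * |(ℓ:ℝ) / K - p| + σw2 / (2 * PF * σh2) / K := by
          rw [abs_mul, abs_of_pos (by positivity : (0:ℝ) < 1 / (2 * PF * N)),
            abs_of_pos (by positivity : (0:ℝ) < σw2 / (2 * PF * σh2) / K)]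
  constructor
  · intro f
    have h := key PF hPF0 hPF1 f
    have heq : (fun K : ℕ => ∫ x, f x ∂(μ0 K)) = (fun K : ℕ =>
        ∑ ℓ ∈ Finset.range (K + 1),
          (K.choose ℓ : ℝ) * PF ^ ℓ * (1 - PF) ^ (K - ℓ) *
            ∫ x, f x ∂(Measure.pi (fun _ : Fin (2 * N) => gaussianReal 0 (v K ℓ).toNNReal))) := by
      funext K
      rw [hμ0 K]
      exact integral_mixture_aux (2 * N) f K
        (fun ℓ => (K.choose ℓ : ℝ) * PF ^ ℓ * (1 - PF) ^ (K - ℓ))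
        (fun ℓ => by have : (0:ℝ) ≤ 1 - PF := by linarith
                     positivity)
        (v K)
    rw [heq]
    have htgt : (1 : ℝ) / (2 * N) = PF / (2 * PF * N) := by
      field_simp
    rw [htgt]
    exact h
  · intro f
    have h := key PD hPD0 hPD1 f
    have heq : (fun K : ℕ => ∫ x, f x ∂(μ1 K)) = (fun K : ℕ =>
        ∑ ℓ ∈ Finset.range (K + 1),
          (K.choose ℓ : ℝ) * PD ^ ℓ * (1 - PD) ^ (K - ℓ) *
            ∫ x, f x ∂(Measure.pi (fun _ : Fin (2 * N) => gaussianReal 0 (v K ℓ).toNNReal))) := by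
      funext K
      rw [hμ1 K]
      exact integral_mixture_aux (2 * N) f K
        (fun ℓ => (K.choose ℓ : ℝ) * PD ^ ℓ * (1 - PD) ^ (K - ℓ))
        (fun ℓ => by have : (0:ℝ) ≤ 1 - PD := by linarith
                     positivity)
        (v K)
    rw [heq]
    exact h
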